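/- Let X and K be topological spaces, f : X × K → ℝ a separately continuous map, and φ : K → C_p(X) defined by φ(y)(x) = f(x,y). Let (Uₙ)ₙ be a sequence of open subsets of K, Γ ⊆ ℝ^X, and let P be the set of y ∈ K for which there is σ ∈ ℕ^ℕ such that y ∈ ⋂ₙ U_{σ(n)} and the sequence (⋂_{i≤n} U_{σ(i)})ₙ is countably pair complete with respect to (φ,Γ). Fix ε > 0 and let R_ε(P) be the set of x ∈ X such that f is ε-continuous at each point of {x} × P. If X is conditionally σ_Γ-α-favorable, then R_ε(P) is a residual subset of X. -/

import Mathlib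

open Set Topology Filter

namespace SepJoint

/-- The list `[f 0, …, f (n-1)]` of the first `n` values of a sequence. -/
def hist {A : Type*} (f : ℕ → A) (n : ℕ) : List A := List.ofFn (fun i : Fin n => f i)

variable (X : Type*) [TopologicalSpace X]

/-- A strategy for player β in games of type `𝒥` (with points): from the list of α's
previous moves `(Uᵢ, aᵢ)`, produce β's next open set `Vₙ`. -/
abbrev BetaStrategy := List (Set X × X) → Set X

/-- A strategy for player α in games of type `𝒥`: from the list `[V₀, …, Vₙ]` of β's moves
(the last being the one to respond to), produce α's move `(Uₙ, aₙ)`. -/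
abbrev AlphaStrategy := List (Set X) → Set X × X

/-- A strategy for player β in games of type `𝒥*`: from the list of α's previous
moves `Uᵢ`, produce β's next open set `Vₙ`. -/
abbrev BetaStrategyStar := List (Set X) → Set X

/-- A strategy for player α in games of type `𝒥*`. -/
abbrev AlphaStrategyStar := List (Set X) → Set X

variable {X}

/-! ### Games of type `𝒥` (α plays pairs `(Uₙ, aₙ)`) -/

/-- α has played legally against the β-strategy `σ` at all stages `< n`:
each `Uᵢ` is a nonempty open subset of β's move `Vᵢ = σ(history)`. -/
def AlphaLegal (σ : BetaStrategy X) (U : ℕ → Set X) (a : ℕ → X) (n : ℕ) : Prop :=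
  ∀ i < n, IsOpen (U i) ∧ (U i).Nonempty ∧ U i ⊆ σ (hist (fun j => (U j, a j)) i)

/-- `σ` is a legal strategy for β: against any legal finite history it produces a nonempty
open set contained in α's previous move. -/
def BetaLegal (σ : BetaStrategy X) : Prop :=
  ∀ (U : ℕ → Set X) (a : ℕ → X) (n : ℕ), AlphaLegal σ U a n →
    IsOpen (σ (hist (fun j => (U j, a j)) n)) ∧
    (σ (hist (fun j => (U j, a j)) n)).Nonempty ∧
    ∀ m, n = m + 1 → σ (hist (fun j => (U j, a j)) n) ⊆ U m

/-- The winning condition for α in the game `𝒥_Γ` on the play with moves `(Uₙ, aₙ)`: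
for each `g ∈ Γ` there is `t ∈ ⋂ₙ Uₙ` with `g t` in the closure of `{g (aₙ) : n}`. -/
def AlphaWinsGamma (Γ : Set (X → ℝ)) (U : ℕ → Set X) (a : ℕ → X) : Prop :=
  ∀ g ∈ Γ, ∃ t ∈ (⋂ n, U n), g t ∈ closure (Set.range fun n => g (a n))

/-- The winning condition for α in the game `𝒥` on the play with moves `(Uₙ, aₙ)`:
`(⋂ₙ Uₙ) ∩ closure {aₙ : n} ≠ ∅`. -/
def AlphaWinsPlain (U : ℕ → Set X) (a : ℕ → X) : Prop :=
  ((⋂ n, U n) ∩ closure (Set.range a)).Nonempty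

/-- `σ` is a winning strategy for β in the game `𝒥_Γ`. -/
def BetaWinningGamma (Γ : Set (X → ℝ)) (σ : BetaStrategy X) : Prop :=
  BetaLegal σ ∧ ∀ U a, (∀ n, AlphaLegal σ U a n) → ¬ AlphaWinsGamma Γ U a

/-- `σ` is a winning strategy for β in the game `𝒥`. -/
def BetaWinningPlain (σ : BetaStrategy X) : Prop :=
  BetaLegal σ ∧ ∀ U a, (∀ n, AlphaLegal σ U a n) → ¬ AlphaWinsPlain U a

/-- `X` is σ_Γ-β-defavorable: β has no winning strategy in the game `𝒥_Γ`. -/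
def SigmaGammaBetaDefavorable (X : Type*) [TopologicalSpace X] (Γ : Set (X → ℝ)) : Prop :=
  ¬ ∃ σ : BetaStrategy X, BetaWinningGamma Γ σ

/-- `X` is σ-β-defavorable: β has no winning strategy in the game `𝒥`. -/
def SigmaBetaDefavorable (X : Type*) [TopologicalSpace X] : Prop :=
  ¬ ∃ σ : BetaStrategy X, BetaWinningPlain σ

/-- Given the α-strategy `τ` and β's moves `V`, α's `n`-th move `(Uₙ, aₙ) = τ [V₀, …, Vₙ]`. -/
def alphaMove (τ : AlphaStrategy X) (V : ℕ → Set X) (n : ℕ) : Set X × X :=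
  τ (hist V (n + 1))

/-- `τ` is a legal strategy for α: along any legal history of β-moves it answers with a
nonempty open subset of β's last move. -/
def AlphaStratLegal (τ : AlphaStrategy X) : Prop :=
  ∀ (V : ℕ → Set X) (n : ℕ), (IsOpen (V 0) ∧ (V 0).Nonempty) →
    (∀ i < n, IsOpen (V (i + 1)) ∧ (V (i + 1)).Nonempty ∧ V (i + 1) ⊆ (alphaMove τ V i).1) →
    IsOpen (alphaMove τ V n).1 ∧ (alphaMove τ V n).1.Nonempty ∧ (alphaMove τ V n).1 ⊆ V n

/-- `V` is a full run of legal moves of β against the α-strategy `τ`. -/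
def BetaLegalRun (τ : AlphaStrategy X) (V : ℕ → Set X) : Prop :=
  IsOpen (V 0) ∧ (V 0).Nonempty ∧
    ∀ n, IsOpen (V (n + 1)) ∧ (V (n + 1)).Nonempty ∧ V (n + 1) ⊆ (alphaMove τ V n).1

/-- `τ` is a conditionally winning strategy for α in the game `𝒥_Γ`: every compatible play
with `⋂ₙ Uₙ ≠ ∅` fulfils the winning condition for α. -/
def CondAlphaWinningGamma (Γ : Set (X → ℝ)) (τ : AlphaStrategy X) : Prop :=
  AlphaStratLegal τ ∧
    ∀ V, BetaLegalRun τ V → (⋂ n, (alphaMove τ V n).1).Nonempty →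
      AlphaWinsGamma Γ (fun n => (alphaMove τ V n).1) (fun n => (alphaMove τ V n).2)

/-- `X` is conditionally σ_Γ-α-favorable. -/
def CondSigmaGammaAlphaFavorable (X : Type*) [TopologicalSpace X] (Γ : Set (X → ℝ)) : Prop :=
  ∃ τ : AlphaStrategy X, CondAlphaWinningGamma Γ τ

/-- `τ` is a conditionally winning strategy for α in the game `𝒥`. -/
def CondAlphaWinningPlain (τ : AlphaStrategy X) : Prop :=
  AlphaStratLegal τ ∧
    ∀ V, BetaLegalRun τ V → (⋂ n, (alphaMove τ V n).1).Nonempty →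
      AlphaWinsPlain (fun n => (alphaMove τ V n).1) (fun n => (alphaMove τ V n).2)

/-- `X` is conditionally σ-α-favorable. -/
def CondSigmaAlphaFavorable (X : Type*) [TopologicalSpace X] : Prop :=
  ∃ τ : AlphaStrategy X, CondAlphaWinningPlain τ

/-! ### Games of type `𝒥*` (α plays only open sets) -/

/-- α has played legally against the β-strategy `σ` in `𝒥*` at all stages `< n`. -/
def AlphaLegalStar (σ : BetaStrategyStar X) (U : ℕ → Set X) (n : ℕ) : Prop :=
  ∀ i < n, IsOpen (U i) ∧ (U i).Nonempty ∧ U i ⊆ σ (hist U i)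

/-- `σ` is a legal strategy for β in `𝒥*`. -/
def BetaLegalStar (σ : BetaStrategyStar X) : Prop :=
  ∀ (U : ℕ → Set X) (n : ℕ), AlphaLegalStar σ U n →
    IsOpen (σ (hist U n)) ∧ (σ (hist U n)).Nonempty ∧ ∀ m, n = m + 1 → σ (hist U n) ⊆ U m

/-- The winning condition for α in the game `𝒥*_Γ` on the play with α-moves `Uₙ`:
for every sequence `(aₙ)` with `aₙ ∈ Uₙ` and every `g ∈ Γ`, there is `t ∈ ⋂ₙ Uₙ` with
`g t` in the closure of `{g (aₙ) : n}`. -/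
def AlphaWinsStar (Γ : Set (X → ℝ)) (U : ℕ → Set X) : Prop :=
  ∀ a : ℕ → X, (∀ n, a n ∈ U n) → ∀ g ∈ Γ,
    ∃ t ∈ (⋂ n, U n), g t ∈ closure (Set.range fun n => g (a n))

/-- `σ` is a winning strategy for β in the game `𝒥*_Γ`. -/
def BetaWinningStar (Γ : Set (X → ℝ)) (σ : BetaStrategyStar X) : Prop :=
  BetaLegalStar σ ∧ ∀ U, (∀ n, AlphaLegalStar σ U n) → ¬ AlphaWinsStar Γ U

/-- `X` is σ*_Γ-β-defavorable: β has no winning strategy in `𝒥*_Γ`. -/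
def SigmaStarBetaDefavorable (X : Type*) [TopologicalSpace X] (Γ : Set (X → ℝ)) : Prop :=
  ¬ ∃ σ : BetaStrategyStar X, BetaWinningStar Γ σ

/-- Given the α-strategy `τ` and β's moves `V`, α's `n`-th move `Uₙ = τ [V₀, …, Vₙ]` in `𝒥*`. -/
def alphaMoveStar (τ : AlphaStrategyStar X) (V : ℕ → Set X) (n : ℕ) : Set X :=
  τ (hist V (n + 1))

/-- `τ` is a legal strategy for α in `𝒥*`. -/
def AlphaStratLegalStar (τ : AlphaStrategyStar X) : Prop :=
  ∀ (V : ℕ → Set X) (n : ℕ), (IsOpen (V 0) ∧ (V 0).Nonempty) →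
    (∀ i < n, IsOpen (V (i + 1)) ∧ (V (i + 1)).Nonempty ∧ V (i + 1) ⊆ alphaMoveStar τ V i) →
    IsOpen (alphaMoveStar τ V n) ∧ (alphaMoveStar τ V n).Nonempty ∧ alphaMoveStar τ V n ⊆ V n

/-- `V` is a full run of legal moves of β against the α-strategy `τ` in `𝒥*`. -/
def BetaLegalRunStar (τ : AlphaStrategyStar X) (V : ℕ → Set X) : Prop :=
  IsOpen (V 0) ∧ (V 0).Nonempty ∧
    ∀ n, IsOpen (V (n + 1)) ∧ (V (n + 1)).Nonempty ∧ V (n + 1) ⊆ alphaMoveStar τ V n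

/-- `τ` is a winning strategy for α in the game `𝒥*_Γ`. -/
def AlphaWinningStar (Γ : Set (X → ℝ)) (τ : AlphaStrategyStar X) : Prop :=
  AlphaStratLegalStar τ ∧
    ∀ V, BetaLegalRunStar τ V → AlphaWinsStar Γ (fun n => alphaMoveStar τ V n)

/-- `τ` is a conditionally winning strategy for α in the game `𝒥*_Γ`. -/
def CondAlphaWinningStar (Γ : Set (X → ℝ)) (τ : AlphaStrategyStar X) : Prop :=
  AlphaStratLegalStar τ ∧
    ∀ V, BetaLegalRunStar τ V → (⋂ n, alphaMoveStar τ V n).Nonempty →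
      AlphaWinsStar Γ (fun n => alphaMoveStar τ V n)

/-- `X` is σ*_Γ-α-favorable. -/
def SigmaStarAlphaFavorable (X : Type*) [TopologicalSpace X] (Γ : Set (X → ℝ)) : Prop :=
  ∃ τ : AlphaStrategyStar X, AlphaWinningStar Γ τ

/-- `X` is conditionally σ*_Γ-α-favorable. -/
def CondSigmaStarAlphaFavorable (X : Type*) [TopologicalSpace X] (Γ : Set (X → ℝ)) : Prop :=
  ∃ τ : AlphaStrategyStar X, CondAlphaWinningStar Γ τ

/-! ### Auxiliary notions -/

/-- `f : X × K → ℝ` is separately continuous. -/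
def SeparatelyContinuous {K : Type*} [TopologicalSpace K] (f : X × K → ℝ) : Prop :=
  (∀ x, Continuous fun y => f (x, y)) ∧ (∀ y, Continuous fun x => f (x, y))

/-- The map `φ : K → ℝ^X`, `φ(y)(x) = f(x, y)`. -/
def phi {X K : Type*} (f : X × K → ℝ) (y : K) : X → ℝ := fun x => f (x, y)

/-- A sequence `(Wₙ)` of subsets of `K` is countably pair complete with respect to `(φ, Γ)`:
for all sequences `yₙ, zₙ ∈ Wₙ`, the sequence `φ(yₙ) - φ(zₙ)` has a cluster point in `Γ`
(`ℝ^X` carrying the product, i.e. pointwise convergence, topology). -/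
def PairComplete {K : Type*} (f : X × K → ℝ) (Γ : Set (X → ℝ)) (W : ℕ → Set K) : Prop :=
  ∀ y z : ℕ → K, (∀ n, y n ∈ W n) → (∀ n, z n ∈ W n) →
    ∃ g ∈ Γ, MapClusterPt g atTop (fun n => phi f (y n) - phi f (z n))

/-- `f` is ε-continuous at `p`. -/
def EpsCont {K : Type*} [TopologicalSpace K] (f : X × K → ℝ) (ε : ℝ) (p : X × K) : Prop :=
  ∃ O ∈ 𝓝 p, ∀ q ∈ O, |f p - f q| < ε

/-- `Y` is a bounded subset of `Z`: every continuous real-valued function on `Z`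
is bounded on `Y`. -/
def BoundedIn {Z : Type*} [TopologicalSpace Z] (Y : Set Z) : Prop :=
  ∀ g : Z → ℝ, Continuous g → ∃ M, ∀ y ∈ Y, |g y| ≤ M

/-- `Y` is relatively countably compact in `Z`: every sequence in `Y` has a cluster
point in `Z`. -/
def RelCountablyCompact {Z : Type*} [TopologicalSpace Z] (Y : Set Z) : Prop :=
  ∀ u : ℕ → Z, (∀ n, u n ∈ Y) → ∃ z : Z, MapClusterPt z atTop u

/-- `K` is pseudocompact: Tychonoff and every continuous real-valued function is bounded. -/
def Pseudocompact (K : Type*) [TopologicalSpace K] : Prop :=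
  T35Space K ∧ BoundedIn (Set.univ : Set K)

/-- `Y` is Čech-complete: Tychonoff, and there is a sequence of open covers of `Y` which is
complete: any filter base of nonempty closed sets, containing for each `n` a set included
in a member of the `n`-th cover, has nonempty intersection. -/
def CechComplete (Y : Type*) [TopologicalSpace Y] : Prop :=
  T35Space Y ∧ ∃ 𝒰 : ℕ → Set (Set Y),
    (∀ n, ∀ U ∈ 𝒰 n, IsOpen U) ∧ (∀ n, ⋃₀ 𝒰 n = Set.univ) ∧
    ∀ ℱ : Set (Set Y),
      (∀ F ∈ ℱ, IsClosed F) → ℱ.Nonempty → (∀ F ∈ ℱ, F.Nonempty) →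
      (∀ F₁ ∈ ℱ, ∀ F₂ ∈ ℱ, ∃ F₃ ∈ ℱ, F₃ ⊆ F₁ ∩ F₂) →
      (∀ n, ∃ F ∈ ℱ, ∃ U ∈ 𝒰 n, F ⊆ U) →
      (⋂₀ ℱ).Nonempty

/-- `Y` is a p-space: Tychonoff, and there is a sequence `(𝒰ₙ)` of open covers of `Y` such
that each `x ∈ Y` has a sequence `Uₙ ∈ 𝒰ₙ` of members containing it whose intersection is
compact and for which `(⋂_{i ≤ n} Uᵢ)ₙ` is an outer base of `⋂ₙ Uₙ`. -/
def PSpace (Y : Type*) [TopologicalSpace Y] : Prop :=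
  T35Space Y ∧ ∃ 𝒰 : ℕ → Set (Set Y),
    (∀ n, ∀ U ∈ 𝒰 n, IsOpen U) ∧ (∀ n, ⋃₀ 𝒰 n = Set.univ) ∧
    ∀ x : Y, ∃ U : ℕ → Set Y, (∀ n, U n ∈ 𝒰 n) ∧ (∀ n, x ∈ U n) ∧
      IsCompact (⋂ n, U n) ∧
      ∀ W : Set Y, IsOpen W → (⋂ n, U n) ⊆ W → ∃ m, (⋂ i ≤ m, U i) ⊆ W

/-- `X` is a Namioka space: for every compact Hausdorff `K`, every separately continuous
`f : X × K → ℝ` is jointly continuous at each point of `R × K` for some dense `R ⊆ X`. -/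
def NamiokaSpace (X : Type*) [TopologicalSpace X] : Prop :=
  ∀ (K : Type*) [TopologicalSpace K], CompactSpace K → T2Space K →
    ∀ f : X × K → ℝ, SeparatelyContinuous f →
      ∃ R : Set X, Dense R ∧ ∀ x ∈ R, ∀ y : K, ContinuousAt f (x, y)

/-- `A` is C-embedded in `Y`: every continuous real-valued function on `A` extends
continuously to `Y`. -/
def CEmbedded {Y : Type*} [TopologicalSpace Y] (A : Set Y) : Prop :=
  ∀ g : A → ℝ, Continuous g → ∃ G : Y → ℝ, Continuous G ∧ ∀ a : A, G a = g a

/-- `A` is C*-embedded in `Y`: every bounded continuous real-valued function on `A`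
extends continuously to `Y`. -/
def CStarEmbedded {Y : Type*} [TopologicalSpace Y] (A : Set Y) : Prop :=
  ∀ g : A → ℝ, Continuous g → (∃ M, ∀ a, |g a| ≤ M) →
    ∃ G : Y → ℝ, Continuous G ∧ ∀ a : A, G a = g a

/-- The family `F ⊆ ℝ^X` is equicontinuous at `x`. -/
def EquicontAt (F : Set (X → ℝ)) (x : X) : Prop :=
  ∀ ε > 0, ∃ U ∈ 𝓝 x, ∀ y ∈ U, ∀ g ∈ F, |g x - g y| < ε

end SepJoint

namespace SepJointAux
open SepJoint
set_option linter.unusedSectionVars false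

lemma hist_take {A : Type*} (g : ℕ → A) {m n : ℕ} (h : m ≤ n) :
    (hist g n).take m = hist g m := by
  apply List.ext_getElem
  · simp [hist, List.length_take, h]
  · intro i h1 h2
    simp only [List.getElem_take, hist, List.getElem_ofFn]

lemma hist_succ {A : Type*} (g : ℕ → A) (n : ℕ) :
    hist g (n+1) = hist g n ++ [g n] := by
  rw [hist, List.ofFn_succ']
  simp [hist, List.concat_eq_append, Fin.coe_castSucc, Fin.val_last]

lemma hist_one {A : Type*} (g : ℕ → A) : hist g 1 = [g 0] := by
  simp [hist]

lemma hist_length {A : Type*} (g : ℕ → A) (n : ℕ) : (hist g n).length = n := by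
  simp [hist]

noncomputable def enum : ℕ → List ℕ := fun n => Denumerable.ofNat (List ℕ) n.unpair.1

lemma enum_spec (s : List ℕ) (N : ℕ) : ∃ n, N ≤ n ∧ enum n = s :=
  ⟨Nat.pair (Encodable.encode s) N, Nat.right_le_pair _ _, by
    simp [enum, Nat.unpair_pair, Denumerable.ofNat_encode]⟩

variable {X K : Type*} [TopologicalSpace X] [TopologicalSpace K]

section Defs

variable (f : X × K → ℝ) (τ : AlphaStrategy X) (U : ℕ → Set K) (ε : ℝ)

/-- The open oscillation set. -/
def GG (b b' : K) : Set X := {t | 3*ε/4 < |f (t, b) - f (t, b')|}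

/-- α's open set in response to the history `p`. -/
def alU (p : List (Set X)) : Set X := (τ p).1

/-- α's point at stage `m` along the history `p`. -/
def aH (p : List (Set X)) (m : ℕ) : X := (τ (p.take (m+1))).2

/-- A valid oscillation pair for a node at level `p.length`, child of `p`. -/
def valP (p : List (Set X)) (b b' : K) : Prop :=
  (∀ i : ℕ, ∀ _ : i < (enum p.length).length,
      b ∈ U ((enum p.length).getD i 0) ∧ b' ∈ U ((enum p.length).getD i 0)) ∧
  ∀ m < p.length, |f (aH τ p m, b) - f (aH τ p m, b')| < (1/2 : ℝ)^(p.length)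

/-- Legal β-histories. -/
def LegalH (p : List (Set X)) : Prop :=
  (∀ i : ℕ, ∀ hi : i < p.length, IsOpen p[i] ∧ p[i].Nonempty) ∧
  ∀ i : ℕ, ∀ hi : i + 1 < p.length, p[i+1] ⊆ alU τ (p.take (i+1))

/-- Level-0 nodes. -/
def Node0 : Set (List (Set X)) := {h | ∃ W : Set X, h = [W] ∧ IsOpen W ∧ W.Nonempty}

/-- Children of a family of nodes. -/
def Child (Fn : Set (List (Set X))) : Set (List (Set X)) :=
  {h | ∃ p ∈ Fn, ∃ V : Set X, h = p ++ [V] ∧ IsOpen V ∧ V.Nonempty ∧ V ⊆ alU τ p ∧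
    ((∃ b b', valP f τ U p b b' ∧ V ⊆ GG f ε b b') ∨
     (∀ b b', valP f τ U p b b' → GG f ε b b' ∩ V = ∅))}

/-- Admissible families: subfamilies of `S` with pairwise disjoint α-responses. -/
def IsFam (S C : Set (List (Set X))) : Prop := C ⊆ S ∧ C.PairwiseDisjoint (alU τ)

lemma exists_maximal_fam (S : Set (List (Set X))) : ∃ C, Maximal (IsFam τ S) C := by
  have := zorn_subset {C : Set (List (Set X)) | IsFam τ S C} ?_
  · exact this
  · intro c hc hchain
    refine ⟨⋃₀ c, ⟨sUnion_subset fun s hs => (hc hs).1, ?_⟩, fun s hs => subset_sUnion_of_mem hs⟩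
    intro h₁ hh₁ h₂ hh₂ hne
    obtain ⟨s₁, hs₁, hm₁⟩ := hh₁
    obtain ⟨s₂, hs₂, hm₂⟩ := hh₂
    rcases eq_or_ne s₁ s₂ with rfl | hss
    · exact (hc hs₁).2 hm₁ hm₂ hne
    · rcases hchain hs₁ hs₂ hss with hsub | hsub
      · exact (hc hs₂).2 (hsub hm₁) hm₂ hne
      · exact (hc hs₁).2 hm₁ (hsub hm₂) hne

/-- The tree of families, level by level. -/
noncomputable def Fam : ℕ → Set (List (Set X))
  | 0 => (exists_maximal_fam τ (Node0 (X := X))).choose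
  | n+1 => (exists_maximal_fam τ (Child f τ U ε (Fam n))).choose

lemma Fam_zero_max : Maximal (IsFam τ (Node0 (X := X))) (Fam f τ U ε 0) :=
  (exists_maximal_fam τ (Node0 (X := X))).choose_spec

lemma Fam_succ_max (n : ℕ) :
    Maximal (IsFam τ (Child f τ U ε (Fam f τ U ε n))) (Fam f τ U ε (n+1)) :=
  (exists_maximal_fam τ (Child f τ U ε (Fam f τ U ε n))).choose_spec

lemma Fam_pd (n : ℕ) : (Fam f τ U ε n).PairwiseDisjoint (alU τ) := by
  cases n with
  | zero => exact (Fam_zero_max f τ U ε).1.2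
  | succ n => exact (Fam_succ_max f τ U ε n).1.2

/-- The union of α-responses at level `n`. -/
def Ou (n : ℕ) : Set X := ⋃ h ∈ Fam f τ U ε n, alU τ h

end Defs

section Props

variable {f : X × K → ℝ} {τ : AlphaStrategy X} {U : ℕ → Set K} {ε : ℝ}

lemma GG_open (hf : SeparatelyContinuous f) (b b' : K) : IsOpen (GG f ε b b') :=
  isOpen_lt continuous_const (((hf.2 b).sub (hf.2 b')).abs)

lemma LegalH_append {p : List (Set X)} {V : Set X} (hleg : LegalH τ p)
    (hV : IsOpen V ∧ V.Nonempty ∧ V ⊆ alU τ p) : LegalH τ (p ++ [V]) := by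
  constructor
  · intro i hi
    simp only [List.length_append, List.length_singleton] at hi
    rcases lt_or_eq_of_le (Nat.lt_succ_iff.mp hi) with h | h
    · rw [List.getElem_append_left h]
      exact hleg.1 i h
    · subst h
      simp only [List.getElem_concat_length]
      exact ⟨hV.1, hV.2.1⟩
  · intro i hi
    simp only [List.length_append, List.length_singleton] at hi
    rcases lt_or_eq_of_le (Nat.lt_succ_iff.mp hi) with h | h
    · rw [List.getElem_append_left h, List.take_append_of_le_length (Nat.le_of_lt h)]
      exact hleg.2 i h
    · have h2 : (p ++ [V]).take (i+1) = p := by rw [h]; exact List.take_left (l₁ := p) (l₂ := [V])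
      have h1 : (p ++ [V])[i+1]'(by simpa using hi) = V := by
        rw [List.getElem_append_right (le_of_eq h.symm)]
        simp [h]
      rw [h1, h2]
      exact hV.2.2

lemma LegalH_single {W : Set X} (hW : IsOpen W) (hWne : W.Nonempty) :
    LegalH τ [W] := by
  constructor
  · intro i hi
    simp only [List.length_singleton] at hi
    interval_cases i
    · simpa using ⟨hW, hWne⟩
  · intro i hi
    simp at hi

lemma Fam_inv (n : ℕ) : ∀ h ∈ Fam f τ U ε n, h.length = n + 1 ∧ LegalH τ h := by
  induction n with
  | zero =>
    intro h hh
    obtain ⟨W, rfl, hW, hWne⟩ := (Fam_zero_max f τ U ε).1.1 hh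
    exact ⟨rfl, LegalH_single hW hWne⟩
  | succ n ih =>
    intro h hh
    obtain ⟨p, hp, V, rfl, hVo, hVne, hVsub, -⟩ := (Fam_succ_max f τ U ε n).1.1 hh
    obtain ⟨hplen, hpleg⟩ := ih p hp
    refine ⟨by simp [hplen], LegalH_append hpleg ⟨hVo, hVne, hVsub⟩⟩

/-- The key consequence of α's legality for legal histories. -/
lemma alU_spec (hτl : AlphaStratLegal τ) {p : List (Set X)} (hne : p ≠ [])
    (hleg : LegalH τ p) :
    IsOpen (alU τ p) ∧ (alU τ p).Nonempty ∧
      alU τ p ⊆ p.getD (p.length - 1) ∅ := by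
  set V : ℕ → Set X := fun i => p.getD i ∅ with hV
  have hlp : 0 < p.length := List.length_pos_iff.2 hne
  have histeq : ∀ m, m + 1 ≤ p.length → hist V (m+1) = p.take (m+1) := by
    intro m hm
    apply List.ext_getElem
    · simp [hist, List.length_take]
      omega
    · intro i h1 h2
      simp only [hist, List.getElem_ofFn, List.getElem_take, hV]
      have : i < p.length := by simp [List.length_take] at h2; omega
      exact List.getD_eq_getElem p ∅ this
  set n := p.length - 1 with hn
  have hn1 : n + 1 = p.length := Nat.succ_pred_eq_of_pos hlp
  have hVgd : ∀ i, ∀ hi : i < p.length, V i = p[i]'hi := by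
    intro i hi
    exact List.getD_eq_getElem p ∅ hi
  have h0 : IsOpen (V 0) ∧ (V 0).Nonempty := by
    rw [hVgd 0 hlp]; exact hleg.1 0 hlp
  have hstep : ∀ i < n, IsOpen (V (i+1)) ∧ (V (i+1)).Nonempty ∧
      V (i+1) ⊆ (alphaMove τ V i).1 := by
    intro i hi
    have hi1 : i + 1 < p.length := by omega
    have hmove : (alphaMove τ V i).1 = alU τ (p.take (i+1)) := by
      unfold alphaMove
      rw [histeq i (by omega)]
      rfl
    rw [hVgd (i+1) hi1, hmove]
    exact ⟨(hleg.1 (i+1) hi1).1, (hleg.1 (i+1) hi1).2, hleg.2 i hi1⟩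
  have := hτl V n h0 hstep
  have hmove : alphaMove τ V n = τ p := by
    unfold alphaMove
    rw [histeq n (by omega), hn1, List.take_length]
  rw [hmove] at this
  exact ⟨this.1, this.2.1, this.2.2⟩

lemma alU_spec_last (hτl : AlphaStratLegal τ) {p : List (Set X)} {V : Set X}
    (hleg : LegalH τ (p ++ [V])) :
    IsOpen (alU τ (p ++ [V])) ∧ (alU τ (p ++ [V])).Nonempty ∧ alU τ (p ++ [V]) ⊆ V := by
  have hne : p ++ [V] ≠ [] := by simp
  have h := alU_spec hτl hne hleg
  refine ⟨h.1, h.2.1, ?_⟩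
  have hl : (p ++ [V]).length - 1 = p.length := by simp
  have hgd : (p ++ [V]).getD ((p ++ [V]).length - 1) ∅ = V := by
    rw [hl, List.getD_eq_getElem _ _ (by simp), List.getElem_concat_length]
    rfl
  rw [hgd] at h
  exact h.2.2

lemma Ou_open (hτl : AlphaStratLegal τ) (n : ℕ) : IsOpen (Ou f τ U ε n) := by
  apply isOpen_biUnion
  intro h hh
  obtain ⟨hlen, hleg⟩ := Fam_inv n h hh
  exact (alU_spec hτl (List.ne_nil_of_length_pos (by omega)) hleg).1

lemma subset_Ou {n : ℕ} {h : List (Set X)} (hh : h ∈ Fam f τ U ε n) :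
    alU τ h ⊆ Ou f τ U ε n :=
  subset_biUnion_of_mem hh

lemma Ou_dense (hτl : AlphaStratLegal τ) (hf : SeparatelyContinuous f) (n : ℕ) :
    Dense (Ou f τ U ε n) := by
  induction n with
  | zero =>
    rw [dense_iff_inter_open]
    intro W₀ hW₀ hW₀ne
    by_contra hno
    have hemp : W₀ ∩ Ou f τ U ε 0 = ∅ := not_nonempty_iff_eq_empty.mp hno
    have hmem : [W₀] ∈ Node0 (X := X) := ⟨W₀, rfl, hW₀, hW₀ne⟩
    have hleg : LegalH τ [W₀] := LegalH_single hW₀ hW₀ne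
    have hAl := alU_spec hτl (by simp : [W₀] ≠ []) hleg
    have hsub : alU τ [W₀] ⊆ W₀ := by
      have := hAl.2.2
      simpa using this
    have hIsFam : IsFam τ (Node0 (X := X)) (insert [W₀] (Fam f τ U ε 0)) := by
      constructor
      · exact insert_subset hmem (Fam_zero_max f τ U ε).1.1
      · apply (Fam_pd f τ U ε 0).insert
        intro h hh hne
        apply Set.disjoint_left.2
        intro t ht ht'
        have : t ∈ W₀ ∩ Ou f τ U ε 0 := ⟨hsub ht, subset_Ou hh ht'⟩
        rw [hemp] at this
        exact this
    have hin : [W₀] ∈ Fam f τ U ε 0 :=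
      (Fam_zero_max f τ U ε).2 hIsFam (subset_insert _ _) (mem_insert _ _)
    obtain ⟨t, ht⟩ := hAl.2.1
    have : t ∈ W₀ ∩ Ou f τ U ε 0 := ⟨hsub ht, subset_Ou hin ht⟩
    rw [hemp] at this
    exact this
  | succ n ih =>
    rw [dense_iff_inter_open]
    intro W₀ hW₀ hW₀ne
    by_contra hno
    have hemp : W₀ ∩ Ou f τ U ε (n+1) = ∅ := not_nonempty_iff_eq_empty.mp hno
    obtain ⟨x₁, hx₁W, hx₁O⟩ := (dense_iff_inter_open.mp ih) W₀ hW₀ hW₀ne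
    obtain ⟨h, hh, hx₁h⟩ := mem_iUnion₂.mp hx₁O
    obtain ⟨hlen, hleg⟩ := Fam_inv n h hh
    have hUo : IsOpen (alU τ h) := (alU_spec hτl (List.ne_nil_of_length_pos (by omega)) hleg).1
    set W := W₀ ∩ alU τ h with hW
    have hWo : IsOpen W := hW₀.inter hUo
    have hWne : W.Nonempty := ⟨x₁, hx₁W, hx₁h⟩
    -- construct a child of h whose move is included in W
    have hchild : ∃ V : Set X, IsOpen V ∧ V.Nonempty ∧ V ⊆ W ∧
        (h ++ [V]) ∈ Child f τ U ε (Fam f τ U ε n) := by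
      by_cases hex : ∃ b b', valP f τ U h b b' ∧ (GG f ε b b' ∩ W).Nonempty
      · obtain ⟨b, b', hv, hne'⟩ := hex
        refine ⟨GG f ε b b' ∩ W, (GG_open hf b b').inter hWo, hne', inter_subset_right, ?_⟩
        exact ⟨h, hh, _, rfl, (GG_open hf b b').inter hWo, hne',
          (inter_subset_right).trans inter_subset_right,
          Or.inl ⟨b, b', hv, inter_subset_left⟩⟩
      · push_neg at hex
        refine ⟨W, hWo, hWne, le_refl _, ?_⟩
        refine ⟨h, hh, _, rfl, hWo, hWne, inter_subset_right, Or.inr ?_⟩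
        intro b b' hv
        exact hex b b' hv
    obtain ⟨V, hVo, hVne, hVW, hcmem⟩ := hchild
    have hclleg : LegalH τ (h ++ [V]) :=
      LegalH_append hleg ⟨hVo, hVne, hVW.trans inter_subset_right⟩
    have hAl := alU_spec_last hτl hclleg
    have hsubW₀ : alU τ (h ++ [V]) ⊆ W₀ := hAl.2.2.trans (hVW.trans inter_subset_left)
    have hIsFam : IsFam τ (Child f τ U ε (Fam f τ U ε n))
        (insert (h ++ [V]) (Fam f τ U ε (n+1))) := by
      constructor
      · exact insert_subset hcmem (Fam_succ_max f τ U ε n).1.1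
      · apply (Fam_pd f τ U ε (n+1)).insert
        intro h' hh' hne
        apply Set.disjoint_left.2
        intro t ht ht'
        have : t ∈ W₀ ∩ Ou f τ U ε (n+1) := ⟨hsubW₀ ht, subset_Ou hh' ht'⟩
        rw [hemp] at this
        exact this
    have hin : (h ++ [V]) ∈ Fam f τ U ε (n+1) :=
      (Fam_succ_max f τ U ε n).2 hIsFam (subset_insert _ _) (mem_insert _ _)
    obtain ⟨t, ht⟩ := hAl.2.1
    have : t ∈ W₀ ∩ Ou f τ U ε (n+1) := ⟨hsubW₀ ht, subset_Ou hin ht⟩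
    rw [hemp] at this
    exact this
end Props
end SepJointAux
open SepJointAux

open SepJoint in
/-- Theorem 3.2 (1): if `X` is conditionally σ_Γ-α-favorable, then the set
`R_ε(P)` of points `x` such that `f` is ε-continuous at each point of `{x} × P` is a
residual subset of `X`. -/
theorem residual_epsilon_continuity_of_condAlphaFavorable
    {X K : Type*} [TopologicalSpace X] [TopologicalSpace K]
    (f : X × K → ℝ) (hf : SeparatelyContinuous f)
    (U : ℕ → Set K) (hU : ∀ n, IsOpen (U n)) (Γ : Set (X → ℝ))
    (P : Set K)
    (hP : P = {y : K | ∃ c : ℕ → ℕ, (∀ n, y ∈ U (c n)) ∧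
        PairComplete f Γ (fun n => ⋂ i ≤ n, U (c i))})
    (ε : ℝ) (hε : 0 < ε)
    (hX : CondSigmaGammaAlphaFavorable X Γ) :
    {x : X | ∀ y ∈ P, EpsCont f ε (x, y)} ∈ residual X := by
  classical
  obtain ⟨τ, hτl, hτw⟩ := hX
  rw [mem_residual_iff]
  refine ⟨Set.range (Ou f τ U ε), ?_, ?_, countable_range _, ?_⟩
  · rintro t ⟨n, rfl⟩; exact Ou_open hτl n
  · rintro t ⟨n, rfl⟩; exact Ou_dense hτl hf n
  rw [sInter_range]
  intro x hx
  simp only [mem_setOf_eq]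
  intro y hyP
  by_contra hbad
  rw [hP] at hyP
  obtain ⟨c, hc1, hc2⟩ := hyP
  have hx' : ∀ n, ∃ h, h ∈ Fam f τ U ε n ∧ x ∈ alU τ h := by
    intro n
    obtain ⟨h, hh, hxh⟩ := mem_iUnion₂.mp (mem_iInter.mp hx n)
    exact ⟨h, hh, hxh⟩
  choose Hh hH1 hH2 using hx'
  have hplen : ∀ n, (Hh n).length = n + 1 := fun n => (Fam_inv n (Hh n) (hH1 n)).1
  have hpleg : ∀ n, LegalH τ (Hh n) := fun n => (Fam_inv n (Hh n) (hH1 n)).2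
  have hHne : ∀ n, Hh n ≠ [] := fun n => List.ne_nil_of_length_pos (by rw [hplen]; omega)
  have huniq : ∀ n h, h ∈ Fam f τ U ε n → x ∈ alU τ h → h = Hh n := by
    intro n h hh hxh
    by_contra hne
    exact Set.disjoint_left.mp (Fam_pd f τ U ε n hh (hH1 n) hne) hxh (hH2 n)
  have hstep : ∀ n, ∃ V : Set X, Hh (n+1) = Hh n ++ [V] ∧ IsOpen V ∧ V.Nonempty ∧
      V ⊆ alU τ (Hh n) ∧
      ((∃ b b', valP f τ U (Hh n) b b' ∧ V ⊆ GG f ε b b') ∨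
       (∀ b b', valP f τ U (Hh n) b b' → GG f ε b b' ∩ V = ∅)) := by
    intro n
    obtain ⟨p, hp, V, heq, hVo, hVne, hVsub, hopt⟩ :=
      (Fam_succ_max f τ U ε n).1.1 (hH1 (n+1))
    have hleg1 : LegalH τ (p ++ [V]) := heq ▸ hpleg (n+1)
    have hxV : x ∈ V := by
      have h1 := alU_spec_last hτl hleg1
      have hx1 : x ∈ alU τ (p ++ [V]) := by rw [← heq]; exact hH2 (n+1)
      exact h1.2.2 hx1
    have hpH : p = Hh n := huniq n p hp (hVsub hxV)
    exact ⟨V, by rw [heq, hpH], hVo, hVne, hpH ▸ hVsub, hpH ▸ hopt⟩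
  choose Vs hVeq hVo hVne hVsub hVopt using hstep
  set Vb : ℕ → Set X := fun n => (Hh n).getD n ∅ with hVbdef
  have hVbs : ∀ n, Vb (n+1) = Vs n := by
    intro n
    have h1 : Vb (n+1) = (Hh (n+1)).getD (n+1) ∅ := rfl
    rw [h1, hVeq n]
    have hl : (Hh n).length = n + 1 := hplen n
    rw [List.getD_eq_getElem _ _ (by simp [hl])]
    rw [List.getElem_append_right (by omega)]
    simp [hl]
  have hhist : ∀ n, hist Vb (n+1) = Hh n := by
    intro n
    induction n with
    | zero =>
      obtain ⟨W, hW, hWo, hWne⟩ := (Fam_zero_max f τ U ε).1.1 (hH1 0)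
      rw [hist_one, hW]
      have h2 : Vb 0 = W := by rw [hVbdef]; simp [hW]
      rw [h2]
    | succ n ih =>
      rw [hist_succ, ih, hVbs n, ← hVeq n]
  have hUf : ∀ n, alphaMove τ Vb n = τ (Hh n) := by
    intro n; unfold alphaMove; rw [hhist n]
  have hrun : BetaLegalRun τ Vb := by
    have h0lt : 0 < (Hh 0).length := by rw [hplen]; omega
    have hVb0 : Vb 0 = (Hh 0)[0]'h0lt := List.getD_eq_getElem _ _ h0lt
    refine ⟨?_, ?_, ?_⟩
    · rw [hVb0]; exact ((hpleg 0).1 0 h0lt).1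
    · rw [hVb0]; exact ((hpleg 0).1 0 h0lt).2
    · intro n
      rw [hVbs n, hUf n]
      exact ⟨hVo n, hVne n, hVsub n⟩
  have hxU : ∀ n, x ∈ (alphaMove τ Vb n).1 := by
    intro n; rw [hUf n]; exact hH2 n
  set af : ℕ → X := fun n => (τ (Hh n)).2 with hafdef
  have hUfVb : ∀ n, (alphaMove τ Vb n).1 ⊆ Vb n := by
    intro n
    rw [hUf n]
    have h5 := (alU_spec hτl (hHne n) (hpleg n)).2.2
    rw [hplen n] at h5
    exact h5
  have hwin := hτw Vb hrun ⟨x, mem_iInter.2 hxU⟩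
  choose nj hnj1 hnj2 using fun j => enum_spec (hist (fun i => (c i : ℕ)) (j+1)) (j+1)
  have haH : ∀ m k, k ≤ m → aH τ (Hh m) k = af k := by
    intro m k hk
    unfold aH
    have h1 : (Hh m).take (k+1) = Hh k := by
      rw [← hhist m, hist_take _ (by omega), hhist k]
    rw [h1, hafdef]
  have hlenj : ∀ j, (Hh (nj j - 1)).length = nj j := by
    intro j
    rw [hplen]
    have := hnj1 j
    omega
  have henumj : ∀ j, enum ((Hh (nj j - 1)).length) = hist (fun i => (c i : ℕ)) (j+1) := by
    intro j; rw [hlenj j, hnj2 j]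
  have hpair : ∀ j, ∃ b b', valP f τ U (Hh (nj j - 1)) b b' ∧
      Vs (nj j - 1) ⊆ GG f ε b b' := by
    intro j
    set m := nj j - 1 with hmdef
    have hm1 : m + 1 = nj j := by rw [hmdef]; have := hnj1 j; omega
    rcases hVopt m with h | hB
    · exact h
    · exfalso
      have hplenm : (Hh m).length = nj j := hlenj j
      set δ := (1/2 : ℝ) ^ (nj j) with hδdef
      have hδpos : 0 < δ := by rw [hδdef]; positivity
      set Bs : Set K := {y' | (∀ i, i ≤ j → y' ∈ U (c i)) ∧
          ∀ k, k < nj j → |f (af k, y') - f (af k, y)| < δ/2} with hBdef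
      have hBo : IsOpen Bs := by
        have hBeq : Bs = (⋂ i ∈ Finset.range (j+1), U (c i)) ∩
            ⋂ k ∈ Finset.range (nj j), {y' | |f (af k, y') - f (af k, y)| < δ/2} := by
          ext y'
          simp [hBdef, Nat.lt_succ_iff]
        rw [hBeq]
        apply IsOpen.inter
        · exact isOpen_biInter_finset fun i _ => hU (c i)
        · refine isOpen_biInter_finset fun k _ => ?_
          exact isOpen_lt (((hf.1 (af k)).sub continuous_const).abs) continuous_const
      have hyB : y ∈ Bs := by
        refine ⟨fun i _ => hc1 i, fun k _ => ?_⟩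
        simp only [sub_self, abs_zero]
        linarith
      have hUfx : x ∈ (alphaMove τ Vb (nj j)).1 := hxU (nj j)
      set As : Set X := (alphaMove τ Vb (nj j)).1 ∩
          {x'' | |f (x'', y) - f (x, y)| < ε/8} with hAdef
      have hAo : IsOpen As := by
        apply IsOpen.inter
        · rw [hUf (nj j)]
          exact (alU_spec hτl (hHne (nj j)) (hpleg (nj j))).1
        · exact isOpen_lt (((hf.2 y).sub continuous_const).abs) continuous_const
      have hxA : x ∈ As := by
        refine ⟨hUfx, ?_⟩
        simp only [mem_setOf_eq, sub_self, abs_zero]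
        linarith
      have hnbhd : As ×ˢ Bs ∈ 𝓝 (x, y) := prod_mem_nhds (hAo.mem_nhds hxA) (hBo.mem_nhds hyB)
      unfold EpsCont at hbad
      push_neg at hbad
      obtain ⟨q, hqmem, hqge⟩ := hbad (As ×ˢ Bs) hnbhd
      obtain ⟨x', y'⟩ := q
      obtain ⟨hx'A, hy'B⟩ := hqmem
      have hosc : 3*ε/4 < |f (x', y') - f (x', y)| := by
        have h2 : |f (x', y) - f (x, y)| < ε/8 := hx'A.2
        have e1 : |f (x, y) - f (x', y)| = |f (x', y) - f (x, y)| := abs_sub_comm _ _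
        have h3 := abs_sub_le (f (x, y)) (f (x', y)) (f (x', y'))
        have e2 : |f (x', y) - f (x', y')| = |f (x', y') - f (x', y)| := abs_sub_comm _ _
        have h1 : ε ≤ |f (x, y) - f (x', y')| := hqge
        linarith
      have hval : valP f τ U (Hh m) y' y := by
        constructor
        · intro i hi
          rw [henumj j, hist_length] at hi
          have hgd : (enum ((Hh m).length)).getD i 0 = c i := by
            rw [henumj j, List.getD_eq_getElem _ _ (by rw [hist_length]; omega)]
            simp only [hist, List.getElem_ofFn]
          rw [hgd]
          exact ⟨hy'B.1 i (by omega), hc1 i⟩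
        · intro k hk
          have hk' : k < nj j := by rw [hplenm] at hk; exact hk
          rw [haH m k (by omega), hplenm]
          have := hy'B.2 k hk'
          rw [← hδdef]
          linarith
      have hGV : GG f ε y' y ∩ Vs m = ∅ := hB y' y hval
      have hx'V : x' ∈ Vs m := by
        have h6 : x' ∈ Vb (nj j) := hUfVb (nj j) hx'A.1
        rw [← hm1, hVbs m] at h6
        exact h6
      have : x' ∈ GG f ε y' y ∩ Vs m := ⟨hosc, hx'V⟩
      rw [hGV] at this
      exact this
  choose bb bb' hvalj hGsub using hpair
  have hmemb : ∀ j, (bb j ∈ ⋂ i, ⋂ _ : i ≤ j, U (c i)) ∧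
      (bb' j ∈ ⋂ i, ⋂ _ : i ≤ j, U (c i)) := by
    intro j
    have key : ∀ i, i ≤ j → bb j ∈ U (c i) ∧ bb' j ∈ U (c i) := by
      intro i hi
      have h1 := (hvalj j).1 i (by rw [henumj j, hist_length]; omega)
      have hgd : (enum ((Hh (nj j - 1)).length)).getD i 0 = c i := by
        rw [henumj j, List.getD_eq_getElem _ _ (by rw [hist_length]; omega)]
        simp only [hist, List.getElem_ofFn]
      rw [hgd] at h1
      exact h1
    constructor
    · simp only [mem_iInter]; exact fun i hi => (key i hi).1
    · simp only [mem_iInter]; exact fun i hi => (key i hi).2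
  obtain ⟨g, hgΓ, hgcl⟩ := hc2 bb bb' (fun j => (hmemb j).1) (fun j => (hmemb j).2)
  have heval : ∀ pt : X,
      MapClusterPt (g pt) atTop (fun j => f (pt, bb j) - f (pt, bb' j)) := by
    intro pt
    rw [mapClusterPt_iff_frequently] at hgcl ⊢
    intro s hs
    have hpre : {h : X → ℝ | h pt ∈ s} ∈ 𝓝 g :=
      (continuous_apply pt).continuousAt.preimage_mem_nhds hs
    exact (hgcl _ hpre).mono (fun j hj => by simpa [phi] using hj)
  have hsmall : ∀ k j, k ≤ j → |f (af k, bb j) - f (af k, bb' j)| ≤ (1/2 : ℝ)^(j+1) := by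
    intro k j hkj
    have hklt : k < (Hh (nj j - 1)).length := by rw [hlenj j]; have := hnj1 j; omega
    have h2 := (hvalj j).2 k hklt
    rw [haH (nj j - 1) k (by have := hnj1 j; rw [hlenj j] at hklt; omega)] at h2
    rw [hlenj j] at h2
    have h3 : ((1:ℝ)/2)^(nj j) ≤ (1/2 : ℝ)^(j+1) :=
      pow_le_pow_of_le_one (by norm_num) (by norm_num) (hnj1 j)
    linarith
  have hg0 : ∀ k, g (af k) = 0 := by
    intro k
    have htend : Tendsto (fun j => f (af k, bb j) - f (af k, bb' j)) atTop (𝓝 0) := by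
      apply squeeze_zero_norm' (a := fun j => (1/2 : ℝ)^(j+1))
      · filter_upwards [eventually_ge_atTop k] with j hj
        rw [Real.norm_eq_abs]
        exact hsmall k j hj
      · exact (tendsto_pow_atTop_nhds_zero_of_lt_one (by norm_num) (by norm_num)).comp
          (tendsto_add_atTop_nat 1)
    have h1 : (𝓝 (g (af k)) ⊓ map (fun j => f (af k, bb j) - f (af k, bb' j)) atTop).NeBot :=
      heval (af k)
    exact eq_of_nhds_neBot (h1.mono (inf_le_inf_left _ htend))
  obtain ⟨t, htI, htcl⟩ := hwin g hgΓ
  have hrange : (Set.range fun n => g ((alphaMove τ Vb n).2)) ⊆ {(0:ℝ)} := by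
    rintro r ⟨n, rfl⟩
    simp only [mem_singleton_iff]
    show g ((alphaMove τ Vb n).2) = 0
    have h3 : (alphaMove τ Vb n).2 = af n := by rw [hUf n, hafdef]
    rw [h3]
    exact hg0 n
  have hgt0 : g t = 0 := by
    have := closure_minimal hrange isClosed_singleton htcl
    simpa using this
  have htG : ∀ j, 3*ε/4 < |f (t, bb j) - f (t, bb' j)| := by
    intro j
    have h1 : t ∈ (alphaMove τ Vb (nj j)).1 := mem_iInter.mp htI (nj j)
    have h2 : t ∈ Vb (nj j) := hUfVb (nj j) h1
    have hm1 : (nj j - 1) + 1 = nj j := by have := hnj1 j; omega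
    rw [← hm1, hVbs] at h2
    exact hGsub j h2
  have hnb : {r : ℝ | |r| < 3*ε/4} ∈ 𝓝 (g t) := by
    rw [hgt0]
    exact (isOpen_lt continuous_abs continuous_const).mem_nhds (by simp; linarith)
  obtain ⟨j, hj⟩ := ((mapClusterPt_iff_frequently.mp (heval t)) _ hnb).exists
  exact absurd (htG j) (not_lt.2 hj.le)
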